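/- Let t ≥ 0 be a real number, let ε ∈ (0,1], let n be a natural number, and let K be a natural number satisfying K ≥ e²·t and K ≥ (n+1) + log₂(1/ε). Then 2^n · t^K / K! ≤ ε/2. -/

import Mathlib

/-- Choosing the Taylor truncation order `K ≥ e²·t` with `K ≥ (n+1) + log₂(1/ε)` makes the
truncation error term `2^n · t^K / K!` at most `ε/2`. -/
theorem taylor_truncation_order_suffices (t : ℝ) (ht : 0 ≤ t) (ε : ℝ)
    (hε : ε ∈ Set.Ioc (0 : ℝ) 1) (n K : ℕ)
    (hK₁ : (K : ℝ) ≥ Real.exp 1 ^ 2 * t)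
    (hK₂ : (K : ℝ) ≥ ((n : ℝ) + 1) + Real.logb 2 (1 / ε)) :
    2 ^ n * t ^ K / (K.factorial : ℝ) ≤ ε / 2 := by
  obtain ⟨hε0, hε1⟩ := hε
  have he : (2.7182818283 : ℝ) < Real.exp 1 := Real.exp_one_gt_d9
  have hlogb : 0 ≤ Real.logb 2 (1 / ε) :=
    Real.logb_nonneg one_lt_two (by rw [le_div_iff₀ hε0]; linarith)
  have hKpos : 0 < K := by
    by_contra h
    push_neg at h
    interval_cases K
    push_cast at hK₂
    have : (0:ℝ) ≤ (n:ℝ) := Nat.cast_nonneg n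
    linarith
  have hKR : (0:ℝ) < K := by exact_mod_cast hKpos
  -- Step 1: t^K / K! ≤ (1/2)^K
  have step1 : t ^ K / (K.factorial : ℝ) ≤ (1/2 : ℝ) ^ K := by
    have hfac : (K:ℝ) ^ K / (K.factorial : ℝ) ≤ Real.exp K :=
      Real.pow_div_factorial_le_exp (x := (K:ℝ)) hKR.le K
    have hfacpos : (0:ℝ) < (K.factorial : ℝ) := by exact_mod_cast K.factorial_pos
    have heq : t ^ K / (K.factorial : ℝ) = (t / K) ^ K * ((K:ℝ) ^ K / (K.factorial : ℝ)) := by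
      field_simp
      rw [div_pow, div_mul_cancel₀ _ (pow_ne_zero _ hKR.ne')]
    rw [heq]
    have h2 : (t / K) ^ K * ((K:ℝ) ^ K / (K.factorial : ℝ)) ≤ (t / K) ^ K * Real.exp K := by
      apply mul_le_mul_of_nonneg_left hfac (by positivity)
    refine h2.trans ?_
    have hexp : Real.exp (K:ℝ) = Real.exp 1 ^ K := by
      rw [← Real.exp_nat_mul, mul_one]
    rw [hexp, ← mul_pow]
    apply pow_le_pow_left₀ (by positivity)
    have hepos : (0:ℝ) < Real.exp 1 := Real.exp_pos 1
    rw [div_mul_eq_mul_div, div_le_iff₀ hKR]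
    nlinarith [mul_nonneg ht hepos.le]
  -- Step 2: 2^n * (1/2)^K ≤ ε/2
  have step2 : (2:ℝ) ^ n * (1/2 : ℝ) ^ K ≤ ε / 2 := by
    have hrw : (2:ℝ) ^ n * (1/2 : ℝ) ^ K = (2:ℝ) ^ ((n:ℝ) + (-(K:ℝ))) := by
      rw [Real.rpow_add two_pos, Real.rpow_natCast, Real.rpow_neg (by norm_num),
        Real.rpow_natCast]
      rw [one_div, inv_pow]
    rw [hrw]
    have h3 : (2:ℝ) ^ ((n:ℝ) + (-(K:ℝ))) ≤ (2:ℝ) ^ (-(1:ℝ) - Real.logb 2 (1/ε)) :=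
      Real.rpow_le_rpow_of_exponent_le one_le_two (by linarith)
    refine h3.trans_eq ?_
    rw [show (-(1:ℝ) - Real.logb 2 (1/ε)) = (-(1:ℝ)) - Real.logb 2 (1/ε) by ring,
      Real.rpow_sub two_pos, Real.rpow_logb two_pos (by norm_num) (one_div_pos.mpr hε0),
      Real.rpow_neg_one]
    field_simp
  calc 2 ^ n * t ^ K / (K.factorial : ℝ) = (2:ℝ) ^ n * (t ^ K / (K.factorial : ℝ)) := by ring
    _ ≤ (2:ℝ) ^ n * (1/2 : ℝ) ^ K := by
        apply mul_le_mul_of_nonneg_left step1 (by positivity)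
    _ ≤ ε / 2 := step2
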